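/- Let N ∈ ℕ, let (ξ_ij)_{1≤i,j≤N} be nonnegative real numbers and let D : ℝ → ℝ be bounded and Lipschitz with constant L. Suppose u, v : [t₀, t₁] → ℝ^N both solve the system d/dt w_i(t) = (1/N) Σ_{j=1}^N ξ_ij D(w_j(t) − w_i(t)) for i ∈ {1,…,N}. Then for all t ∈ [t₀, t₁], ‖u(t) − v(t)‖_{2,N} ≤ e^{L (α_N + γ_N)(t − t₀)} ‖u(t₀) − v(t₀)‖_{2,N}, where α_N := ((1/N²) Σ_{i,j} ξ_ij²)^{1/2} and γ_N := max_{1≤i≤N} (1/N) Σ_{j=1}^N ξ_ij. -/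

import Mathlib

open MeasureTheory ProbabilityTheory Real

noncomputable section

/-- The interval `[0,1]`. -/
def I01 : Set ℝ := Set.Icc 0 1

/-- The weighted Euclidean norm `‖v‖_{2,N} = ((1/N) ∑ i, v i ^ 2)^{1/2}` on `ℝ^N`. -/
def norm2N (N : ℕ) (v : Fin N → ℝ) : ℝ :=
  Real.sqrt ((1 / (N : ℝ)) * ∑ i, v i ^ 2)

lemma euclid_norm_sq (n : ℕ) (x : EuclideanSpace ℝ (Fin n)) :
    ‖x‖ ^ 2 = ∑ i, x i ^ 2 := by
  rw [EuclideanSpace.norm_eq, Real.sq_sqrt (by positivity)]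
  simp [Real.norm_eq_abs, sq_abs]

lemma euclid_mono (n : ℕ) (x y : EuclideanSpace ℝ (Fin n))
    (h : ∀ i, |x i| ≤ y i) : ‖x‖ ≤ ‖y‖ := by
  rw [EuclideanSpace.norm_eq, EuclideanSpace.norm_eq]
  apply Real.sqrt_le_sqrt
  apply Finset.sum_le_sum
  intro i _
  simp only [Real.norm_eq_abs, sq_abs]
  calc x i ^ 2 = |x i| ^ 2 := (sq_abs _).symm
    _ ≤ y i ^ 2 := by nlinarith [h i, abs_nonneg (x i)]

theorem gronwall_stability
    (N : ℕ) (hN : 0 < N) (ξ : Fin N → Fin N → ℝ) (hξ : ∀ i j, 0 ≤ ξ i j)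
    (D : ℝ → ℝ) (K L : ℝ) (hK : ∀ z, |D z| ≤ K)
    (hL : ∀ a b, |D a - D b| ≤ L * |a - b|)
    (t₀ t₁ : ℝ) (u v : ℝ → Fin N → ℝ)
    (hu : ∀ i, ∀ t ∈ Set.Icc t₀ t₁, HasDerivAt (fun s => u s i)
      ((1 / (N : ℝ)) * ∑ j, ξ i j * D (u t j - u t i)) t)
    (hv : ∀ i, ∀ t ∈ Set.Icc t₀ t₁, HasDerivAt (fun s => v s i)
      ((1 / (N : ℝ)) * ∑ j, ξ i j * D (v t j - v t i)) t) :
    ∀ t ∈ Set.Icc t₀ t₁,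
      norm2N N (fun i => u t i - v t i) ≤
        Real.exp (L * (Real.sqrt ((1 / (N : ℝ) ^ 2) * ∑ i, ∑ j, ξ i j ^ 2) +
            ⨆ i, (1 / (N : ℝ)) * ∑ j, ξ i j) * (t - t₀)) *
          norm2N N (fun i => u t₀ i - v t₀ i) := by
  have hL0 : 0 ≤ L := by
    have h := hL 0 1
    have h2 := abs_nonneg (D 0 - D 1)
    simp only [zero_sub, abs_neg, abs_one, mul_one] at h
    linarith
  have hNpos : (0:ℝ) < N := Nat.cast_pos.2 hN
  have hNne : (N:ℝ) ≠ 0 := ne_of_gt hNpos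
  set α := Real.sqrt ((1 / (N:ℝ)^2) * ∑ i, ∑ j, ξ i j ^ 2) with hαdef
  set γ := ⨆ i, (1/(N:ℝ)) * ∑ j, ξ i j with hγdef
  have hα0 : 0 ≤ α := Real.sqrt_nonneg _
  have hγle : ∀ i, (1/(N:ℝ)) * ∑ j, ξ i j ≤ γ := by
    intro i
    rw [hγdef]
    exact le_ciSup (f := fun i : Fin N => (1/(N:ℝ)) * ∑ j, ξ i j)
      (Set.Finite.bddAbove (Set.finite_range _)) i
  have hγ0 : 0 ≤ γ := le_trans
    (mul_nonneg (by positivity) (Finset.sum_nonneg fun j _ => hξ _ j)) (hγle ⟨0, hN⟩)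
  set C := L * (α + γ) with hCdef
  let f : ℝ → EuclideanSpace ℝ (Fin N) := fun s => WithLp.toLp 2 (fun i => u s i - v s i)
  let f' : ℝ → EuclideanSpace ℝ (Fin N) := fun s => WithLp.toLp 2 (fun i =>
    (1/(N:ℝ)) * ∑ j, ξ i j * D (u s j - u s i)
      - (1/(N:ℝ)) * ∑ j, ξ i j * D (v s j - v s i))
  have hderiv : ∀ s ∈ Set.Icc t₀ t₁, HasDerivAt f (f' s) s := by
    intro s hs
    have hg : HasDerivAt (fun r => (fun i => u r i - v r i : Fin N → ℝ))
        (fun i => (1/(N:ℝ)) * ∑ j, ξ i j * D (u s j - u s i)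
          - (1/(N:ℝ)) * ∑ j, ξ i j * D (v s j - v s i)) s :=
      hasDerivAt_pi.2 fun i => (hu i s hs).sub (hv i s hs)
    exact ((PiLp.continuousLinearEquiv 2 ℝ
      (fun _ : Fin N => ℝ)).symm.toContinuousLinearMap.hasFDerivAt.comp_hasDerivAt s hg)
  have hbound : ∀ s ∈ Set.Icc t₀ t₁, ‖f' s‖ ≤ C * ‖f s‖ := by
    intro s hs
    set w : EuclideanSpace ℝ (Fin N) := f s with hw
    set A : EuclideanSpace ℝ (Fin N) := WithLp.toLp 2 (fun i => (L/(N:ℝ)) * ∑ j, ξ i j * |w j|) with hA_def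
    set B : EuclideanSpace ℝ (Fin N) := WithLp.toLp 2 (fun i => (L*γ) * |w i|) with hB_def
    have hstep : ∀ i, |f' s i| ≤ (A + B) i := by
      intro i
      have h1 : f' s i = (1/(N:ℝ)) * ∑ j, ξ i j * (D (u s j - u s i) - D (v s j - v s i)) := by
        show (1/(N:ℝ)) * ∑ j, ξ i j * D (u s j - u s i)
          - (1/(N:ℝ)) * ∑ j, ξ i j * D (v s j - v s i) = _
        rw [Finset.mul_sum, Finset.mul_sum, Finset.mul_sum, ← Finset.sum_sub_distrib]
        exact Finset.sum_congr rfl fun j _ => by ring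
      have h2 : |∑ j, ξ i j * (D (u s j - u s i) - D (v s j - v s i))|
          ≤ ∑ j, ξ i j * (L * |w j| + L * |w i|) := by
        refine (Finset.abs_sum_le_sum_abs _ _).trans (Finset.sum_le_sum fun j _ => ?_)
        rw [abs_mul, abs_of_nonneg (hξ i j)]
        refine mul_le_mul_of_nonneg_left ?_ (hξ i j)
        have h3 := hL (u s j - u s i) (v s j - v s i)
        have heq : (u s j - u s i) - (v s j - v s i) = w j - w i := by
          show _ = (u s j - v s j) - (u s i - v s i); ring
        rw [heq] at h3
        calc |D (u s j - u s i) - D (v s j - v s i)| ≤ L * |w j - w i| := h3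
          _ ≤ L * (|w j| + |w i|) := mul_le_mul_of_nonneg_left (abs_sub _ _) hL0
          _ = L * |w j| + L * |w i| := by ring
      have h4 : (1/(N:ℝ)) * ∑ j, ξ i j * (L * |w j| + L * |w i|)
          = (L/(N:ℝ)) * (∑ j, ξ i j * |w j|) + L * ((1/(N:ℝ)) * ∑ j, ξ i j) * |w i| := by
        rw [Finset.sum_congr rfl (fun j _ =>
          (by ring : ξ i j * (L * |w j| + L * |w i|)
            = L * (ξ i j * |w j|) + ξ i j * (L * |w i|))),
          Finset.sum_add_distrib, ← Finset.mul_sum, ← Finset.sum_mul]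
        ring
      have h5 : L * ((1/(N:ℝ)) * ∑ j, ξ i j) * |w i| ≤ (L*γ) * |w i| := by
        have := mul_le_mul_of_nonneg_left (hγle i) hL0
        exact mul_le_mul_of_nonneg_right (by linarith [this]) (abs_nonneg _)
      calc |f' s i| = (1/(N:ℝ)) * |∑ j, ξ i j * (D (u s j - u s i) - D (v s j - v s i))| := by
            rw [h1, abs_mul, abs_of_nonneg (by positivity : (0:ℝ) ≤ 1/(N:ℝ))]
        _ ≤ (1/(N:ℝ)) * ∑ j, ξ i j * (L * |w j| + L * |w i|) :=
            mul_le_mul_of_nonneg_left h2 (by positivity)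
        _ = (L/(N:ℝ)) * (∑ j, ξ i j * |w j|) + L * ((1/(N:ℝ)) * ∑ j, ξ i j) * |w i| := h4
        _ ≤ (L/(N:ℝ)) * (∑ j, ξ i j * |w j|) + (L*γ) * |w i| := by linarith [h5]
        _ = (A + B) i := rfl
    have hAbd : ‖A‖ ≤ L * α * ‖w‖ := by
      have hsq : ‖A‖^2 ≤ (L * α * ‖w‖)^2 := by
        rw [euclid_norm_sq]
        have hCS : ∀ i, (∑ j, ξ i j * |w j|)^2 ≤ (∑ j, ξ i j ^2) * ∑ j, w j ^2 := by
          intro i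
          have := Finset.sum_mul_sq_le_sq_mul_sq Finset.univ (fun j => ξ i j) (fun j => |w j|)
          simpa [sq_abs] using this
        have hα2 : α^2 = (1/(N:ℝ)^2) * ∑ i, ∑ j, ξ i j ^2 := Real.sq_sqrt (by positivity)
        have hw2 : ‖w‖^2 = ∑ j, w j ^2 := euclid_norm_sq N w
        calc ∑ i, A i ^2 = ∑ i, (L/(N:ℝ))^2 * (∑ j, ξ i j * |w j|)^2 := by
              exact Finset.sum_congr rfl fun i _ => by rw [hA_def]; ring
          _ ≤ ∑ i, (L/(N:ℝ))^2 * ((∑ j, ξ i j^2) * ∑ j, w j^2) :=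
              Finset.sum_le_sum fun i _ => mul_le_mul_of_nonneg_left (hCS i) (by positivity)
          _ = (L/(N:ℝ))^2 * ((∑ i, ∑ j, ξ i j^2) * ∑ j, w j^2) := by
              rw [← Finset.mul_sum, ← Finset.sum_mul]
          _ = (L * α * ‖w‖)^2 := by
              rw [mul_pow, mul_pow, hα2, hw2]
              field_simp
      calc ‖A‖ = Real.sqrt (‖A‖^2) := (Real.sqrt_sq (norm_nonneg _)).symm
        _ ≤ Real.sqrt ((L*α*‖w‖)^2) := Real.sqrt_le_sqrt hsq
        _ = L*α*‖w‖ := Real.sqrt_sq (by positivity)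
    have hBbd : ‖B‖ ≤ L * γ * ‖w‖ := by
      have hsq : ‖B‖^2 ≤ (L * γ * ‖w‖)^2 := by
        refine le_of_eq ?_
        rw [euclid_norm_sq]
        have hw2 : ‖w‖^2 = ∑ j, w j ^2 := euclid_norm_sq N w
        calc ∑ i, B i ^2 = ∑ i, (L*γ)^2 * w i ^2 := by
              exact Finset.sum_congr rfl fun i _ => by
                rw [hB_def]; rw [mul_pow, sq_abs]
          _ = (L*γ)^2 * ∑ i, w i ^2 := by rw [← Finset.mul_sum]
          _ = (L * γ * ‖w‖)^2 := by rw [mul_pow (L*γ) ‖w‖, hw2]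
      calc ‖B‖ = Real.sqrt (‖B‖^2) := (Real.sqrt_sq (norm_nonneg _)).symm
        _ ≤ Real.sqrt ((L*γ*‖w‖)^2) := Real.sqrt_le_sqrt hsq
        _ = L*γ*‖w‖ := Real.sqrt_sq (by positivity)
    calc ‖f' s‖ ≤ ‖A + B‖ := euclid_mono N (f' s) (A + B) hstep
      _ ≤ ‖A‖ + ‖B‖ := norm_add_le _ _
      _ ≤ L*α*‖w‖ + L*γ*‖w‖ := add_le_add hAbd hBbd
      _ = C * ‖w‖ := by rw [hCdef]; ring
  intro t ht
  have hcont : ContinuousOn f (Set.Icc t₀ t₁) := fun s hs =>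
    (hderiv s hs).continuousAt.continuousWithinAt
  have hd : ∀ s ∈ Set.Ico t₀ t₁, HasDerivWithinAt f (f' s) (Set.Ici s) s :=
    fun s hs => (hderiv s (Set.Ico_subset_Icc_self hs)).hasDerivWithinAt
  have hgb := norm_le_gronwallBound_of_norm_deriv_right_le (ε := 0)
    (hf := hcont) (hf' := hd) (ha := le_refl ‖f t₀‖)
    (bound := fun s hs => by
      rw [add_zero]; exact hbound s (Set.Ico_subset_Icc_self hs)) t ht
  rw [gronwallBound_ε0] at hgb
  have hnorm_eq : ∀ r : ℝ, norm2N N (fun i => u r i - v r i)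
      = Real.sqrt (1/(N:ℝ)) * ‖f r‖ := by
    intro r
    have h6 : ‖f r‖ = Real.sqrt (∑ i, (u r i - v r i)^2) := by
      rw [← Real.sqrt_sq (norm_nonneg (f r)), euclid_norm_sq]
    rw [norm2N, Real.sqrt_mul (by positivity), h6]
  calc norm2N N (fun i => u t i - v t i) = Real.sqrt (1/(N:ℝ)) * ‖f t‖ := hnorm_eq t
    _ ≤ Real.sqrt (1/(N:ℝ)) * (‖f t₀‖ * Real.exp (C * (t - t₀))) :=
        mul_le_mul_of_nonneg_left hgb (Real.sqrt_nonneg _)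
    _ = Real.exp (C * (t - t₀)) * (Real.sqrt (1/(N:ℝ)) * ‖f t₀‖) := by ring
    _ = Real.exp (C * (t - t₀)) * norm2N N (fun i => u t₀ i - v t₀ i) := by
        rw [hnorm_eq t₀]

end
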